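/- Let ψ ∈ ℂ^d be a unit vector with |⟨e_m, ψ⟩|² = 1/d for all m in the eigenbasis of J (eigenvalues m = −j,...,j, d = 2j+1), and let n ≥ d. Define states ρ_l = e^{-iJθ_l}|ψ⟩⟨ψ|e^{iJθ_l} for θ_l = 2πl/n, l = 0,...,n−1, and POVM elements Π_l = (d/n)·e^{-iJθ_l}|ψ⟩⟨ψ|e^{iJθ_l}. Then Σ_l Π_l = I, and the success probability (1/n)Σ_l Tr(ρ_l Π_l) equals d/n. -/

import Mathlib

open Complex Real BigOperators Matrix

noncomputable section

/-- The rotated state `e^{-iJθ_l}ψ` for `J` diagonal with eigenvalues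
`μ_m = (d−1)/2 − m` and `θ_l = 2πl/n`. -/
def rotState (d n : ℕ) (ψ : Fin d → ℂ) (l : Fin n) : Fin d → ℂ :=
  fun m => Complex.exp (-Complex.I * ((((d : ℝ) - 1) / 2 - (m : ℝ) : ℝ) : ℂ) *
    ((2 * Real.pi * (l : ℝ) / (n : ℝ) : ℝ) : ℂ)) * ψ m

/-- The state `ρ_l = e^{-iJθ_l}|ψ⟩⟨ψ|e^{iJθ_l}` as a matrix. -/
def rotProj (d n : ℕ) (ψ : Fin d → ℂ) (l : Fin n) : Matrix (Fin d) (Fin d) ℂ :=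
  Matrix.vecMulVec (rotState d n ψ l) (star (rotState d n ψ l))

lemma sum_exp_eq_zero (n : ℕ) (k : ℤ) (hk : k ≠ 0) (hk' : k.natAbs < n) :
    ∑ l : Fin n, Complex.exp (Complex.I * k * (2 * Real.pi * l / n)) = 0 := by
  have hn : 0 < n := lt_of_le_of_lt (Nat.zero_le _) hk'
  have hnc : (n:ℂ) ≠ 0 := Nat.cast_ne_zero.mpr hn.ne'
  set z : ℂ := Complex.exp (Complex.I * k * (2 * Real.pi / n)) with hzdef
  have hz : ∀ l : Fin n, Complex.exp (Complex.I * k * (2 * Real.pi * l / n)) = z ^ (l:ℕ) := by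
    intro l
    rw [hzdef, ← Complex.exp_nat_mul]
    congr 1
    field_simp
  simp_rw [hz]
  rw [Fin.sum_univ_eq_sum_range (fun i => z ^ i) n]
  have hz1 : z ≠ 1 := by
    intro h
    rw [hzdef, Complex.exp_eq_one_iff] at h
    obtain ⟨m, hm⟩ := h
    have hπ : (Real.pi:ℂ) ≠ 0 := by exact_mod_cast Real.pi_ne_zero
    have hk2 : (k:ℂ) = m * n := by
      field_simp at hm
      have h2 : Complex.I * (k:ℂ) * (2 * Real.pi) = Complex.I * ((m:ℂ) * n) * (2 * Real.pi) := by
        linear_combination (Complex.I * 2 * Real.pi) * hm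
      have h3 := mul_right_cancel₀ (show (2*(Real.pi:ℂ)) ≠ 0 by simp [hπ]) h2
      exact mul_left_cancel₀ Complex.I_ne_zero h3
    have hk3 : k = m * n := by exact_mod_cast hk2
    rcases eq_or_ne m 0 with h0 | h0
    · exact hk (by simp [hk3, h0])
    · have : n ≤ k.natAbs := by
        rw [hk3, Int.natAbs_mul, Int.natAbs_natCast]
        have h1 : 1 ≤ m.natAbs := by omega
        calc n = 1 * n := (one_mul n).symm
        _ ≤ m.natAbs * n := Nat.mul_le_mul_right n h1
      omega
  rw [geom_sum_eq hz1]
  have hzn : z ^ n = 1 := by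
    rw [hzdef, ← Complex.exp_nat_mul]
    have : (n:ℂ) * (Complex.I * k * (2 * Real.pi / n)) = k * (2 * Real.pi * Complex.I) := by
      field_simp
    rw [this, Complex.exp_int_mul_two_pi_mul_I]
  simp [hzn]

lemma rotProj_apply (d n : ℕ) (φ : Fin d → ℝ) (ψ : Fin d → ℂ)
    (hψ : ∀ m, ψ m = Complex.exp (Complex.I * (φ m)) / (Real.sqrt d : ℂ))
    (l : Fin n) (m m' : Fin d) :
    rotProj d n ψ l m m' =
      Complex.exp (Complex.I * ((φ m : ℝ) - (φ m' : ℝ)) ) / d *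
        Complex.exp (Complex.I * ((((m : ℕ) : ℤ) - ((m' : ℕ) : ℤ) : ℤ) : ℂ) * (2 * Real.pi * l / n)) := by
  have hsq : (Real.sqrt d : ℂ) * (Real.sqrt d : ℂ) = (d : ℂ) := by
    rw [← Complex.ofReal_mul, Real.mul_self_sqrt (Nat.cast_nonneg d)]
    push_cast; ring
  simp only [rotProj, rotState, Matrix.vecMulVec_apply, Pi.star_apply, hψ, star_mul',
    star_div₀, Complex.star_def, ← Complex.exp_conj, _root_.map_mul, map_neg, Complex.conj_I,
    Complex.conj_ofReal]
  rw [show ∀ (A B C D s : ℂ), A * (B/s) * (C * (D/s)) = (A*B*C*D)/(s*s) from fun _ _ _ _ _ => by ring,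
    hsq, ← Complex.exp_add, ← Complex.exp_add, ← Complex.exp_add,
    div_mul_eq_mul_div, ← Complex.exp_add]
  congr 1
  push_cast
  ring

lemma rotProj_diag (d n : ℕ) (_hd : 0 < d) (φ : Fin d → ℝ) (ψ : Fin d → ℂ)
    (hψ : ∀ m, ψ m = Complex.exp (Complex.I * (φ m)) / (Real.sqrt d : ℂ))
    (l : Fin n) (i : Fin d) :
    rotState d n ψ l i * star (rotState d n ψ l i) = 1 / d := by
  have := rotProj_apply d n φ ψ hψ l i i
  simp only [rotProj, Matrix.vecMulVec_apply, Pi.star_apply] at this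
  rw [this]
  simp

/-- For `ψ` unbiased in the eigenbasis of `J` (components `e^{iφ_m}/√d`) and `n ≥ d`, the
operators `Π_l = (d/n)·e^{-iJθ_l}|ψ⟩⟨ψ|e^{iJθ_l}` with `θ_l = 2πl/n` form a POVM
(`Σ_l Π_l = I`), and the success probability `(1/n)·Σ_l Tr(ρ_l Π_l)` equals `d/n`. -/
theorem discrete_phase_estimation_povm (d n : ℕ) (hd : 0 < d) (hn : d ≤ n)
    (φ : Fin d → ℝ) (ψ : Fin d → ℂ)
    (hψ : ∀ m, ψ m = Complex.exp (Complex.I * (φ m)) / (Real.sqrt d : ℂ)) :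
    (∑ l : Fin n, ((d : ℂ) / (n : ℂ)) • rotProj d n ψ l = 1) ∧
    ((1 / (n : ℂ)) * ∑ l : Fin n,
        (rotProj d n ψ l * (((d : ℂ) / (n : ℂ)) • rotProj d n ψ l)).trace =
      (d : ℂ) / (n : ℂ)) := by
  have hn0 : 0 < n := lt_of_lt_of_le hd hn
  have hdc : (d:ℂ) ≠ 0 := Nat.cast_ne_zero.mpr hd.ne'
  have hnc : (n:ℂ) ≠ 0 := Nat.cast_ne_zero.mpr hn0.ne'
  constructor
  · ext m m'
    rw [Matrix.sum_apply]
    simp only [Matrix.smul_apply, smul_eq_mul]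
    simp_rw [rotProj_apply d n φ ψ hψ _ m m']
    rcases eq_or_ne m m' with rfl | hmm
    · simp only [sub_self, Int.cast_zero, mul_zero, zero_mul, Complex.exp_zero, mul_one, one_div]
      rw [Finset.sum_const, Finset.card_univ, Fintype.card_fin]
      rw [Matrix.one_apply_eq]
      field_simp
      rw [nsmul_eq_mul]; field_simp
    · have hk : ((m : ℕ) : ℤ) - ((m' : ℕ) : ℤ) ≠ 0 := by
        simp only [ne_eq, sub_eq_zero]
        exact_mod_cast fun h => hmm (Fin.ext (by exact_mod_cast h))
      have hk' : (((m : ℕ) : ℤ) - ((m' : ℕ) : ℤ)).natAbs < n := by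
        have := m.isLt; have := m'.isLt
        omega
      rw [← Finset.mul_sum, ← Finset.mul_sum]
      rw [sum_exp_eq_zero n _ hk hk', Matrix.one_apply_ne hmm]
      ring
  · have htr : ∀ l : Fin n,
        (rotProj d n ψ l * (((d : ℂ) / (n : ℂ)) • rotProj d n ψ l)).trace = (d:ℂ)/n := by
      intro l
      have hsum : ∑ i : Fin d, rotState d n ψ l i * star (rotState d n ψ l i) = 1 := by
        simp_rw [rotProj_diag d n hd φ ψ hψ l]
        rw [Finset.sum_const, Finset.card_univ, Fintype.card_fin]
        field_simp
        rw [nsmul_eq_mul]; field_simp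
      simp only [Matrix.trace, Matrix.diag_apply, Matrix.mul_apply, Matrix.smul_apply,
        smul_eq_mul, rotProj, Matrix.vecMulVec_apply, Pi.star_apply]
      have key : ∀ m : Fin d, (∑ i : Fin d,
          rotState d n ψ l m * star (rotState d n ψ l i) *
            ((d:ℂ)/n * (rotState d n ψ l i * star (rotState d n ψ l m)))) =
          (d:ℂ)/n * (rotState d n ψ l m * star (rotState d n ψ l m)) := by
        intro m
        calc (∑ i : Fin d, rotState d n ψ l m * star (rotState d n ψ l i) *
                ((d:ℂ)/n * (rotState d n ψ l i * star (rotState d n ψ l m))))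
            = ∑ i : Fin d, (d:ℂ)/n * (rotState d n ψ l m * star (rotState d n ψ l m)) *
                (rotState d n ψ l i * star (rotState d n ψ l i)) :=
              Finset.sum_congr rfl fun i _ => by ring
          _ = (d:ℂ)/n * (rotState d n ψ l m * star (rotState d n ψ l m)) *
                ∑ i : Fin d, rotState d n ψ l i * star (rotState d n ψ l i) := by
              rw [← Finset.mul_sum]
          _ = (d:ℂ)/n * (rotState d n ψ l m * star (rotState d n ψ l m)) := by
              rw [hsum, mul_one]
      simp_rw [key]
      rw [← Finset.mul_sum, hsum, mul_one]
    simp_rw [htr]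
    rw [Finset.sum_const, Finset.card_univ, Fintype.card_fin]
    field_simp
    rw [nsmul_eq_mul]; field_simp

end
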